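/- arXiv:2007.15168 — 3 statements merged into one kernel-verified Lean document; each statement's English description precedes it below -/
import Mathlib

section
/- Let (Ω, μ) be a finite measure space and let a group G act on Ω by measure-preserving transformations. Suppose there exist a subset S ⊆ G and ε' > 0 such that for every f ∈ L^2(Ω, μ) with ∫ f dμ = 0 one has sup_{γ ∈ S} ‖f∘γ^{-1} − f‖_2^2 ≥ ε' ‖f‖_2^2. Then there exists ε > 0 such that for every measurable A ⊆ Ω with μ(A) < μ(Ω)/2, sup_{γ ∈ S} μ(γA Δ A) ≥ ε · μ(A), where Δ may be replaced by the symmetric difference or by μ(γA \ A) up to constants. -/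
open MeasureTheory Set

lemma sq_eLpNorm_two {Ω : Type*} [MeasurableSpace Ω] (μ : Measure Ω) (f : Ω → ℝ) :
    eLpNorm f 2 μ ^ 2 = ∫⁻ ω, (‖f ω‖₊ : ENNReal) ^ 2 ∂μ := by
  rw [eLpNorm_eq_lintegral_rpow_enorm_toReal two_ne_zero ENNReal.ofNat_ne_top]
  rw [← ENNReal.rpow_natCast _ 2, ← ENNReal.rpow_mul]
  norm_num
  rfl

theorem spectral_gap_sets {G Ω : Type*} [Group G] [MulAction G Ω] [MeasurableSpace Ω]
    (μ : Measure Ω) [IsFiniteMeasure μ]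
    (hmp : ∀ γ : G, MeasurePreserving (fun ω => γ • ω) μ μ)
    (S : Set G) (ε' : ℝ) (hε' : 0 < ε')
    (hgap : ∀ f : Ω → ℝ, MemLp f 2 μ → (∫ ω, f ω ∂μ) = 0 →
      ENNReal.ofReal ε' * eLpNorm f 2 μ ^ 2 ≤
        ⨆ γ ∈ S, eLpNorm (fun ω => f (γ⁻¹ • ω) - f ω) 2 μ ^ 2) :
    ∃ ε > (0 : ℝ), ∀ A : Set Ω, MeasurableSet A → 2 * μ A < μ univ →
      ENNReal.ofReal ε * μ A ≤ ⨆ γ ∈ S, μ ((fun ω => γ • ω) '' A \ A) := by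
  refine ⟨ε' / 8, by positivity, fun A hA hA2 => ?_⟩
  have hμA : μ A < ⊤ := measure_lt_top μ A
  have hμu : μ univ ≠ ⊤ := measure_ne_top μ univ
  have hupos : (0 : ℝ) < (μ univ).toReal := by
    refine ENNReal.toReal_pos (fun h => ?_) hμu
    rw [h] at hA2; exact absurd hA2 (by simp)
  set c : ℝ := (μ A).toReal / (μ univ).toReal with hc
  have hc0 : 0 ≤ c := by positivity
  have hclt : c < 1 / 2 := by
    rw [hc, div_lt_div_iff₀ hupos (by norm_num)]
    have h2 : (2 * μ A).toReal < (μ univ).toReal :=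
      ENNReal.toReal_strict_mono hμu hA2
    rw [ENNReal.toReal_mul] at h2
    simp at h2 ⊢
    linarith
  set f : Ω → ℝ := fun ω => A.indicator (fun _ => (1 : ℝ)) ω - c with hf
  have hmem : MemLp f 2 μ :=
    (memLp_indicator_const 2 hA 1 (Or.inr hμA.ne)).sub (memLp_const c)
  have hint : ∫ ω, f ω ∂μ = 0 := by
    have h1 : Integrable (A.indicator fun _ => (1 : ℝ)) μ :=
      (integrable_indicator_iff hA).2 (integrableOn_const hμA.ne)
    rw [hf]
    rw [integral_sub h1 (integrable_const c), integral_indicator_const _ hA, integral_const]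
    simp only [smul_eq_mul, mul_one, hc, measureReal_def]
    field_simp
    ring
  have hkey := hgap f hmem hint
  -- lower bound on ‖f‖²
  have hN : ENNReal.ofReal (1 / 4) * μ A ≤ eLpNorm f 2 μ ^ 2 := by
    rw [sq_eLpNorm_two]
    have hpt : ∀ ω, A.indicator (fun _ => ENNReal.ofReal (1 / 4)) ω ≤ (‖f ω‖₊ : ENNReal) ^ 2 := by
      intro ω
      by_cases hω : ω ∈ A
      · rw [indicator_of_mem hω]
        have : ((‖f ω‖₊ : ENNReal)) ^ 2 = ENNReal.ofReal ((f ω) ^ 2) := by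
          rw [← enorm_eq_nnnorm, ← ofReal_norm, ← ENNReal.ofReal_pow (norm_nonneg _),
            Real.norm_eq_abs, sq_abs]
        rw [this, hf]
        simp only [indicator_of_mem hω]
        refine ENNReal.ofReal_le_ofReal ?_
        nlinarith
      · rw [indicator_of_notMem hω]; exact zero_le
    calc ENNReal.ofReal (1 / 4) * μ A
        = ∫⁻ ω, A.indicator (fun _ => ENNReal.ofReal (1 / 4)) ω ∂μ := by
          rw [lintegral_indicator hA, setLIntegral_const]
      _ ≤ _ := lintegral_mono hpt
  -- upper bound for each γ
  have hupper : ∀ γ : G, eLpNorm (fun ω => f (γ⁻¹ • ω) - f ω) 2 μ ^ 2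
      = 2 * μ ((fun ω => γ • ω) '' A \ A) := by
    intro γ
    set B : Set Ω := (fun ω => γ⁻¹ • ω) ⁻¹' A with hB
    have hBmeas : MeasurableSet B := (hmp γ⁻¹).measurable hA
    have hBeq : (fun ω => γ • ω) '' A = B := by
      ext ω
      constructor
      · rintro ⟨a, ha, rfl⟩
        simpa [hB, inv_smul_smul] using ha
      · intro h
        exact ⟨γ⁻¹ • ω, h, smul_inv_smul γ ω⟩
    have hμB : μ B = μ A := (hmp γ⁻¹).measure_preimage hA.nullMeasurableSet
    have hAB : μ (A \ B) = μ (B \ A) := by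
      have h1 : μ (A \ B) + μ (A ∩ B) = μ A := measure_diff_add_inter A hBmeas
      have h2 : μ (B \ A) + μ (A ∩ B) = μ B := by
        rw [inter_comm]; exact measure_diff_add_inter B hA
      have h3 : μ (A \ B) + μ (A ∩ B) = μ (B \ A) + μ (A ∩ B) := by
        rw [h1, h2, hμB]
      have hfin : μ (A ∩ B) ≠ ⊤ := (measure_lt_top μ _).ne
      rw [add_comm (μ (A \ B)), add_comm (μ (B \ A))] at h3
      exact (ENNReal.add_right_inj hfin).mp h3
    have hptf : ∀ ω, ((‖f (γ⁻¹ • ω) - f ω‖₊ : ENNReal)) ^ 2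
        = (B \ A).indicator 1 ω + (A \ B).indicator 1 ω := by
      intro ω
      have hfB : f (γ⁻¹ • ω) - f ω
          = B.indicator (fun _ => (1 : ℝ)) ω - A.indicator (fun _ => (1 : ℝ)) ω := by
        have hind : A.indicator (fun _ => (1 : ℝ)) (γ⁻¹ • ω)
            = B.indicator (fun _ => (1 : ℝ)) ω := by
          by_cases h : γ⁻¹ • ω ∈ A
          · rw [indicator_of_mem h, indicator_of_mem (show ω ∈ B from h)]
          · rw [indicator_of_notMem h, indicator_of_notMem (show ω ∉ B from h)]
        simp only [hf, hind]
        ring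
      rw [hfB]
      by_cases h1 : ω ∈ B <;> by_cases h2 : ω ∈ A
      · rw [indicator_of_mem h1, indicator_of_mem h2,
          indicator_of_notMem (show ω ∉ B \ A from fun hh => hh.2 h2),
          indicator_of_notMem (show ω ∉ A \ B from fun hh => hh.2 h1)]
        simp
      · rw [indicator_of_mem h1, indicator_of_notMem h2,
          indicator_of_mem (show ω ∈ B \ A from ⟨h1, h2⟩),
          indicator_of_notMem (show ω ∉ A \ B from fun hh => h2 hh.1)]
        simp
      · rw [indicator_of_notMem h1, indicator_of_mem h2,
          indicator_of_notMem (show ω ∉ B \ A from fun hh => h1 hh.1),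
          indicator_of_mem (show ω ∈ A \ B from ⟨h2, h1⟩)]
        rw [show (0 : ℝ) - 1 = -1 by ring]
        simp
      · rw [indicator_of_notMem h1, indicator_of_notMem h2,
          indicator_of_notMem (show ω ∉ B \ A from fun hh => h1 hh.1),
          indicator_of_notMem (show ω ∉ A \ B from fun hh => h2 hh.1)]
        simp
    rw [sq_eLpNorm_two, lintegral_congr hptf, lintegral_add_left
      (measurable_one.indicator (hBmeas.diff hA)),
      lintegral_indicator_one (hBmeas.diff hA), lintegral_indicator_one (hA.diff hBmeas),
      hBeq, hAB, two_mul]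
  -- sup bound
  have hsup : (⨆ γ ∈ S, eLpNorm (fun ω => f (γ⁻¹ • ω) - f ω) 2 μ ^ 2)
      ≤ 2 * ⨆ γ ∈ S, μ ((fun ω => γ • ω) '' A \ A) := by
    refine iSup₂_le fun γ hγ => ?_
    rw [hupper γ]
    exact mul_le_mul_right
      (le_iSup₂ (f := fun γ (_ : γ ∈ S) => μ ((fun ω => γ • ω) '' A \ A)) γ hγ) 2
  have hchain : ENNReal.ofReal ε' * (ENNReal.ofReal (1 / 4) * μ A)
      ≤ 2 * ⨆ γ ∈ S, μ ((fun ω => γ • ω) '' A \ A) :=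
    le_trans (mul_le_mul_right hN _) (le_trans hkey hsup)
  have hco : ENNReal.ofReal ε' * (ENNReal.ofReal (1 / 4) * μ A)
      = 2 * (ENNReal.ofReal (ε' / 8) * μ A) := by
    rw [← mul_assoc, ← ENNReal.ofReal_mul hε'.le, ← mul_assoc,
      ← ENNReal.ofReal_ofNat 2, ← ENNReal.ofReal_mul (by norm_num)]
    ring_nf
  rw [hco] at hchain
  exact (ENNReal.mul_le_mul_iff_right two_ne_zero ENNReal.ofNat_ne_top).mp hchain
end

section
/- Let (Ω, μ) be a finite measure space, p > 1, α > 1, δ > 0, and let f : Ω → [0, ∞) be measurable. Set A_k = {ω : f(ω) ≥ α^k} for k ∈ ℕ. If there exists N ∈ ℕ such that μ(A_k \ A_{k+1}) ≥ δ · μ(A_{k+1}) for all k ≥ N, and if α^p < 1 + δ, then f ∈ L^p(Ω, μ). -/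
open MeasureTheory Set

theorem geometric_levelsets_Lp {Ω : Type*} [MeasurableSpace Ω] (μ : Measure Ω)
    [IsFiniteMeasure μ] (p α δ : ℝ) (hp : 1 < p) (hα : 1 < α) (hδ : 0 < δ)
    (f : Ω → ℝ) (hf : Measurable f) (hf0 : ∀ ω, 0 ≤ f ω)
    (N : ℕ)
    (hN : ∀ k, N ≤ k →
      ENNReal.ofReal δ * μ {ω | α ^ (k + 1) ≤ f ω} ≤
        μ ({ω | α ^ k ≤ f ω} \ {ω | α ^ (k + 1) ≤ f ω}))
    (hαp : α ^ p < 1 + δ) :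
    ∫⁻ ω, ENNReal.ofReal (f ω ^ p) ∂μ < ⊤ := by
  set A : ℕ → Set Ω := fun k => {ω | α ^ k ≤ f ω} with hA
  have hαpos : (0:ℝ) < α := lt_trans zero_lt_one hα
  have hppos : (0:ℝ) < p := lt_trans zero_lt_one hp
  have hmeas : ∀ k, MeasurableSet (A k) := fun k => measurableSet_le measurable_const hf
  have hmono : ∀ k, A (k+1) ⊆ A k := by
    intro k ω hω
    exact le_trans (pow_le_pow_right₀ hα.le (Nat.le_succ k)) hω
  have hc0 : ENNReal.ofReal (1+δ) ≠ 0 := (ENNReal.ofReal_pos.mpr (by linarith)).ne'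
  have hcT : ENNReal.ofReal (1+δ) ≠ ⊤ := ENNReal.ofReal_ne_top
  -- step inequality
  have hstep : ∀ k, N ≤ k → ENNReal.ofReal (1+δ) * μ (A (k+1)) ≤ μ (A k) := by
    intro k hk
    have h1 := hN k hk
    have h2 : μ (A (k+1)) + μ (A k \ A (k+1)) = μ (A k) := by
      rw [measure_add_diff (hmeas (k+1)).nullMeasurableSet (A k), union_eq_self_of_subset_left (hmono k)]
    calc ENNReal.ofReal (1+δ) * μ (A (k+1))
        = 1 * μ (A (k+1)) + ENNReal.ofReal δ * μ (A (k+1)) := by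
          rw [ENNReal.ofReal_add zero_le_one hδ.le, add_mul, ENNReal.ofReal_one]
      _ ≤ μ (A (k+1)) + μ (A k \ A (k+1)) := by
          rw [one_mul]; exact add_le_add le_rfl h1
      _ = μ (A k) := h2
  -- geometric decay
  have hdecay : ∀ m, μ (A (N+m)) ≤ (ENNReal.ofReal (1+δ))⁻¹ ^ m * μ univ := by
    intro m
    induction m with
    | zero => simpa using measure_mono (subset_univ _)
    | succ m ih =>
      calc μ (A (N+m+1))
          = (ENNReal.ofReal (1+δ))⁻¹ * (ENNReal.ofReal (1+δ) * μ (A (N+m+1))) := by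
            rw [← mul_assoc, ENNReal.inv_mul_cancel hc0 hcT, one_mul]
        _ ≤ (ENNReal.ofReal (1+δ))⁻¹ * μ (A (N+m)) :=
            mul_le_mul_right (hstep (N+m) (Nat.le_add_right N m)) _
        _ ≤ (ENNReal.ofReal (1+δ))⁻¹ * ((ENNReal.ofReal (1+δ))⁻¹ ^ m * μ univ) :=
            mul_le_mul_right ih _
        _ = (ENNReal.ofReal (1+δ))⁻¹ ^ (m+1) * μ univ := by ring
  -- power identity
  have hpow : ∀ k : ℕ, (α ^ k : ℝ) ^ p = (α ^ p) ^ k := by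
    intro k
    rw [← Real.rpow_natCast α k, ← Real.rpow_natCast (α^p) k,
      ← Real.rpow_mul hαpos.le, ← Real.rpow_mul hαpos.le, mul_comm]
  have hαp1 : (1:ℝ) ≤ α ^ p := by
    calc (1:ℝ) = 1 ^ p := (Real.one_rpow p).symm
      _ ≤ α ^ p := Real.rpow_le_rpow zero_le_one hα.le hppos.le
  have hαppos : (0:ℝ) < α ^ p := lt_of_lt_of_le zero_lt_one hαp1
  -- pointwise bound
  have hptw : ∀ (k : ℕ) (ω : Ω), f ω < α ^ k →
      ENNReal.ofReal (f ω ^ p) ≤ ENNReal.ofReal ((α ^ p) ^ k) := by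
    intro k ω h
    refine ENNReal.ofReal_le_ofReal ?_
    rw [← hpow k]
    exact Real.rpow_le_rpow (hf0 ω) h.le hppos.le
  -- cover
  have hcover : (A N)ᶜ ∪ ⋃ m, (A (N+m) \ A (N+m+1)) = univ := by
    ext ω
    simp only [mem_union, mem_iUnion, mem_univ, iff_true, mem_compl_iff, mem_diff,
      hA, mem_setOf_eq, not_le]
    by_cases h0 : f ω < α ^ N
    · exact Or.inl h0
    · right
      push_neg at h0
      obtain ⟨n, hn⟩ := pow_unbounded_of_one_lt (f ω) hα
      have hex : ∃ k, f ω < α ^ k := ⟨n, hn⟩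
      set k := Nat.find hex with hk
      have hk1 : f ω < α ^ k := Nat.find_spec hex
      have hk2 : ∀ j < k, α ^ j ≤ f ω := fun j hj => not_lt.mp (Nat.find_min hex hj)
      have hNk : N < k := by
        by_contra h
        push_neg at h
        exact absurd (lt_of_lt_of_le hk1 (pow_le_pow_right₀ hα.le h)) (not_lt.mpr h0)
      refine ⟨k - N - 1, ?_, ?_⟩
      · exact hk2 _ (by omega)
      · have : N + (k - N - 1) + 1 = k := by omega
        rw [this]; exact hk1
  set K := ENNReal.ofReal ((α ^ p) ^ (N+1)) with hK
  set r := ENNReal.ofReal (α ^ p) * (ENNReal.ofReal (1+δ))⁻¹ with hr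
  have hrdiv : r = ENNReal.ofReal (α ^ p / (1+δ)) := by
    rw [hr, ENNReal.ofReal_div_of_pos (by linarith), div_eq_mul_inv]
  have hr1 : r < 1 := by
    rw [hrdiv]
    exact ENNReal.ofReal_lt_one.mpr ((div_lt_one (by linarith)).mpr hαp)
  have hterm : ∀ m, ∫⁻ ω in A (N+m) \ A (N+m+1), ENNReal.ofReal (f ω ^ p) ∂μ ≤
      K * r ^ m * μ univ := by
    intro m
    have hb : ∫⁻ ω in A (N+m) \ A (N+m+1), ENNReal.ofReal (f ω ^ p) ∂μ ≤
        ENNReal.ofReal ((α ^ p) ^ (N+m+1)) * μ (A (N+m) \ A (N+m+1)) := by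
      rw [← setLIntegral_const]
      refine setLIntegral_mono' ((hmeas (N+m)).diff (hmeas (N+m+1))) ?_
      intro ω hω
      refine hptw (N+m+1) ω ?_
      have := hω.2
      simpa only [hA, mem_setOf_eq, not_le] using this
    refine hb.trans ?_
    have h1 : μ (A (N+m) \ A (N+m+1)) ≤ μ (A (N+m)) := measure_mono diff_subset
    calc ENNReal.ofReal ((α ^ p) ^ (N+m+1)) * μ (A (N+m) \ A (N+m+1))
        ≤ ENNReal.ofReal (α ^ p) ^ (N+1) * ENNReal.ofReal (α ^ p) ^ m *
            ((ENNReal.ofReal (1+δ))⁻¹ ^ m * μ univ) := by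
          have he : ((α ^ p : ℝ)) ^ (N+m+1) = (α ^ p) ^ (N+1) * (α ^ p) ^ m := by
            rw [← pow_add]; ring_nf
          rw [he, ENNReal.ofReal_mul (by positivity), ENNReal.ofReal_pow hαppos.le,
            ENNReal.ofReal_pow hαppos.le]
          exact mul_le_mul_right ((h1.trans (hdecay m))) _
      _ = K * r ^ m * μ univ := by
          rw [hK, hr, ENNReal.ofReal_pow hαppos.le, mul_pow]; ring
  -- first piece
  have hfirst : ∫⁻ ω in (A N)ᶜ, ENNReal.ofReal (f ω ^ p) ∂μ ≤ K * μ univ := by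
    have hb : ∫⁻ ω in (A N)ᶜ, ENNReal.ofReal (f ω ^ p) ∂μ ≤
        ENNReal.ofReal ((α ^ p) ^ N) * μ ((A N)ᶜ) := by
      rw [← setLIntegral_const]
      refine setLIntegral_mono' (hmeas N).compl ?_
      intro ω hω
      refine hptw N ω ?_
      simpa only [hA, mem_compl_iff, mem_setOf_eq, not_le] using hω
    refine hb.trans ?_
    have h1 : ENNReal.ofReal ((α ^ p) ^ N) ≤ K := by
      rw [hK]
      exact ENNReal.ofReal_le_ofReal (pow_le_pow_right₀ hαp1 (Nat.le_succ N))
    exact mul_le_mul' h1 (measure_mono (subset_univ _))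
  have hKT : K ≠ ⊤ := ENNReal.ofReal_ne_top
  have hμT : μ univ ≠ ⊤ := measure_ne_top μ univ
  have hsum : ∑' m : ℕ, r ^ m ≠ ⊤ := by
    rw [ENNReal.tsum_geometric]
    exact ENNReal.inv_ne_top.mpr (by simpa [tsub_eq_zero_iff_le, not_le] using hr1)
  calc ∫⁻ ω, ENNReal.ofReal (f ω ^ p) ∂μ
      = ∫⁻ ω in (A N)ᶜ ∪ ⋃ m, (A (N+m) \ A (N+m+1)), ENNReal.ofReal (f ω ^ p) ∂μ := by
        rw [hcover, setLIntegral_univ]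
    _ ≤ (∫⁻ ω in (A N)ᶜ, ENNReal.ofReal (f ω ^ p) ∂μ) +
        ∫⁻ ω in ⋃ m, (A (N+m) \ A (N+m+1)), ENNReal.ofReal (f ω ^ p) ∂μ :=
        lintegral_union_le _ _ _
    _ ≤ K * μ univ + ∑' m : ℕ, ∫⁻ ω in A (N+m) \ A (N+m+1), ENNReal.ofReal (f ω ^ p) ∂μ :=
        add_le_add hfirst (lintegral_iUnion_le _ _)
    _ ≤ K * μ univ + ∑' m : ℕ, K * r ^ m * μ univ :=
        add_le_add le_rfl (ENNReal.tsum_le_tsum hterm)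
    _ = K * μ univ + K * μ univ * ∑' m : ℕ, r ^ m := by
        rw [← ENNReal.tsum_mul_left]
        congr 1
        refine tsum_congr fun m => by ring
    _ < ⊤ := by
        refine ENNReal.add_lt_top.mpr ⟨?_, ?_⟩
        · exact ENNReal.mul_lt_top hKT.lt_top hμT.lt_top
        · exact ENNReal.mul_lt_top (ENNReal.mul_lt_top hKT.lt_top hμT.lt_top) hsum.lt_top
end

section
/- Let (Ω, μ) be a finite measure space, f : Ω → [0, ∞) measurable, and z > 0. Let T : Ω → Ω be measure-preserving with the property that μ({ω : f(ω) > z and f(Tω) ≤ z}) ≥ ε·μ({f > z}) for some ε > 0. Define ψ^{(z)} as in the paper: ψ^{(z)} = f + c_z on {f > z} and ψ^{(z)} = c_z on {f ≤ z}, with c_z = ∫_{{f ≤ z}} f dμ ≥ 0. Then ‖ψ^{(z)}∘T^{-1} − ψ^{(z)}‖_{L^1} ≥ z·ε·μ({ω : f(ω) > z}). -/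
open MeasureTheory Set

theorem psi_translate_lower_bound {Ω : Type*} [MeasurableSpace Ω] (μ : Measure Ω)
    [IsFiniteMeasure μ] (f : Ω → ℝ) (hf : Measurable f) (hf0 : ∀ ω, 0 ≤ f ω)
    (z : ℝ) (hz : 0 < z) (T : Ω ≃ᵐ Ω) (hT : MeasurePreserving T μ μ)
    (ε : ℝ) (hε : 0 < ε)
    (hmix : ENNReal.ofReal ε * μ {ω | z < f ω} ≤ μ {ω | z < f ω ∧ f (T ω) ≤ z})
    (c : ℝ) (hc : c = ∫ ω in {ω | f ω ≤ z}, f ω ∂μ)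
    (ψ : Ω → ℝ) (hψ : ∀ ω, ψ ω = if z < f ω then f ω + c else c) :
    ENNReal.ofReal (z * ε) * μ {ω | z < f ω} ≤
      ∫⁻ ω, ENNReal.ofReal |ψ (T.symm ω) - ψ ω| ∂μ := by
  have hψm : Measurable ψ := by
    have : ψ = fun ω => if z < f ω then f ω + c else c := funext hψ
    rw [this]
    exact Measurable.ite (measurableSet_lt measurable_const hf)
      (hf.add measurable_const) measurable_const
  have hA : MeasurableSet {ω | z < f ω ∧ f (T ω) ≤ z} := by
    have : {ω | z < f ω ∧ f (T ω) ≤ z} =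
        {ω | z < f ω} ∩ {ω | f (T ω) ≤ z} := rfl
    rw [this]
    exact (measurableSet_lt measurable_const hf).inter
      (measurableSet_le (hf.comp T.measurable) measurable_const)
  have hchange : ∫⁻ ω, ENNReal.ofReal |ψ (T.symm ω) - ψ ω| ∂μ
      = ∫⁻ ω, ENNReal.ofReal |ψ ω - ψ (T ω)| ∂μ := by
    have hm : Measurable fun ω => ENNReal.ofReal |ψ (T.symm ω) - ψ ω| :=
      ENNReal.measurable_ofReal.comp
        (((hψm.comp T.symm.measurable).sub hψm).abs)
    have := hT.lintegral_comp hm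
    rw [← this]
    refine lintegral_congr fun ω => ?_
    simp
  rw [hchange]
  calc ENNReal.ofReal (z * ε) * μ {ω | z < f ω}
      = ENNReal.ofReal z * (ENNReal.ofReal ε * μ {ω | z < f ω}) := by
        rw [ENNReal.ofReal_mul hz.le, mul_assoc]
    _ ≤ ENNReal.ofReal z * μ {ω | z < f ω ∧ f (T ω) ≤ z} := by
        exact mul_le_mul_right hmix _
    _ = ∫⁻ _ω in {ω | z < f ω ∧ f (T ω) ≤ z}, ENNReal.ofReal z ∂μ := by
        rw [setLIntegral_const, mul_comm]
    _ ≤ ∫⁻ ω in {ω | z < f ω ∧ f (T ω) ≤ z}, ENNReal.ofReal |ψ ω - ψ (T ω)| ∂μ := by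
        refine setLIntegral_mono' hA fun ω hω => ?_
        obtain ⟨h1, h2⟩ := hω
        have hv : ψ ω - ψ (T ω) = f ω := by
          rw [hψ ω, hψ (T ω), if_pos h1, if_neg (not_lt.mpr h2)]
          ring
        apply ENNReal.ofReal_le_ofReal
        rw [hv, abs_of_nonneg (hf0 ω)]
        exact h1.le
    _ ≤ ∫⁻ ω, ENNReal.ofReal |ψ ω - ψ (T ω)| ∂μ := setLIntegral_le_lintegral _ _
end
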